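/- Define g : ℂ → ℂ by g(z) = z·(2|z| − |z|²). Then for every z₀ ∈ ℂ with |z₀| = 1, g is real-Fréchet-differentiable at z₀, its real Fréchet derivative L = Dg(z₀) : ℂ → ℂ is complex-linear (i.e. L(c·v) = c·L(v) for all c, v ∈ ℂ; equivalently ∂̄g(z₀) = 0), and the determinant of L regarded as an ℝ-linear endomorphism of ℂ equals 1 (i.e. the real Jacobian J_g(z₀) = 1). -/

import Mathlib

/-- The symbol of the Example: `g(z) = z·(2|z| − |z|²)`. -/
noncomputable def exampleSymbol (z : ℂ) : ℂ :=
  z * ((2 * ‖z‖ - (‖z‖) ^ 2 : ℝ) : ℂ)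

lemma exampleSymbol_hasFDerivAt (z₀ : ℂ) (hz₀ : ‖z₀‖ = 1) :
    HasFDerivAt exampleSymbol (ContinuousLinearMap.id ℝ ℂ) z₀ := by
  have hnorm : ‖z₀‖ = 1 := hz₀
  -- derivative of ‖z‖^2
  have h_sq : HasFDerivAt (fun z : ℂ => ‖z‖ ^ 2) (2 • (innerSL ℝ z₀)) z₀ :=
    (hasStrictFDerivAt_norm_sq z₀).hasFDerivAt
  -- derivative of ‖z‖ = sqrt (‖z‖^2)
  have hsqrt : HasDerivAt Real.sqrt (1 / (2 * Real.sqrt (‖z₀‖ ^ 2))) (‖z₀‖ ^ 2) :=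
    Real.hasDerivAt_sqrt (by rw [hnorm]; norm_num)
  have h_norm : HasFDerivAt (fun z : ℂ => ‖z‖)
      ((1 / (2 * Real.sqrt (‖z₀‖ ^ 2))) • (2 • (innerSL ℝ z₀))) z₀ := by
    have h := hsqrt.comp_hasFDerivAt z₀ h_sq
    have hfe : (Real.sqrt ∘ fun z : ℂ => ‖z‖ ^ 2) = fun z : ℂ => ‖z‖ :=
      funext fun z => Real.sqrt_sq (norm_nonneg z)
    rw [hfe] at h
    exact h
  have h_norm' : HasFDerivAt (fun z : ℂ => ‖z‖) (innerSL ℝ z₀) z₀ := by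
    have : (1 / (2 * Real.sqrt (‖z₀‖ ^ 2))) • (2 • (innerSL ℝ z₀)) = innerSL ℝ z₀ := by
      rw [hnorm]
      ext v
      simp; ring
    rwa [this] at h_norm
  -- the scalar function r z = 2‖z‖ - ‖z‖^2 has derivative 0 at z₀
  have h_r : HasFDerivAt (fun z : ℂ => 2 * ‖z‖ - ‖z‖ ^ 2)
      ((0 : ℂ →L[ℝ] ℝ)) z₀ := by
    have := ((h_norm'.const_mul (2 : ℝ)).sub h_sq)
    have heq : (2 : ℝ) • innerSL ℝ z₀ - 2 • innerSL ℝ z₀ = (0 : ℂ →L[ℝ] ℝ) := by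
      ext v; simp; ring
    exact this.congr_fderiv (by ext v; simp; ring)
  have h_smul := h_r.smul (hasFDerivAt_id z₀)
  have hval : (2 : ℝ) * ‖z₀‖ - ‖z₀‖ ^ 2 = 1 := by rw [hnorm]; norm_num
  have hfun : exampleSymbol = fun z : ℂ => (2 * ‖z‖ - ‖z‖ ^ 2) • z := by
    funext z
    simp [exampleSymbol, Complex.real_smul, mul_comm]
  rw [hfun]
  refine h_smul.congr_fderiv ?_
  ext v
  simp [hz₀]
  norm_num

/-- At every point of the unit circle, `g` is real-differentiable, its real Fréchet
derivative is complex-linear (`∂̄g = 0`), and its real Jacobian determinant equals `1`. -/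
theorem projected_composition_stmt14 (z₀ : ℂ) (hz₀ : ‖z₀‖ = 1) :
    DifferentiableAt ℝ exampleSymbol z₀ ∧
    (∀ c v : ℂ, fderiv ℝ exampleSymbol z₀ (c * v) = c * fderiv ℝ exampleSymbol z₀ v) ∧
    LinearMap.det ((fderiv ℝ exampleSymbol z₀ : ℂ →L[ℝ] ℂ) : ℂ →ₗ[ℝ] ℂ) = 1 := by
  have h := exampleSymbol_hasFDerivAt z₀ hz₀
  have hd := h.fderiv
  refine ⟨h.differentiableAt, ?_, ?_⟩
  · intro c v; simp [hd]
  · rw [hd]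
    simp
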